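/- Let C = ∫ ∇f(x) ∇f(x)ᵀ ρ(x) dx where ρ is a probability density that is positive on an open connected set Ω ⊆ ℝᵐ and zero elsewhere, and f is C¹. If C u = 0 for some u ∈ ℝᵐ, then the directional derivative uᵀ∇f(x) vanishes for all x ∈ Ω; consequently f is constant along u within Ω. -/

import Mathlib

open Matrix MeasureTheory

/-- If ρ is a probability density positive on an open connected set Ω
and zero elsewhere, f is C¹, and C u = 0 for C = ∫ ∇f ∇fᵀ ρ dx, then the directional
derivative uᵀ∇f vanishes on Ω; consequently f is constant along u within Ω. -/
theorem stmt7 (m : ℕ)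
    (Ω : Set (EuclideanSpace ℝ (Fin m))) (hΩo : IsOpen Ω) (hΩc : IsConnected Ω)
    (f : EuclideanSpace ℝ (Fin m) → ℝ)
    (hf : ContDiff ℝ 1 f)
    (G : EuclideanSpace ℝ (Fin m) → EuclideanSpace ℝ (Fin m))
    (hG : ∀ x, HasGradientAt f (G x) x)
    (ρ : EuclideanSpace ℝ (Fin m) → ℝ) (hρm : Measurable ρ)
    (hρpos : ∀ x ∈ Ω, 0 < ρ x) (hρz : ∀ x ∉ Ω, ρ x = 0)
    (M : ℝ) (hρb : ∀ x, ρ x ≤ M)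
    (hρ1 : ∫ x, ρ x = 1)
    (hInt : ∀ i j, Integrable (fun x => G x i * G x j * ρ x))
    (C : Matrix (Fin m) (Fin m) ℝ)
    (hC : ∀ i j, C i j = ∫ x, G x i * G x j * ρ x)
    (u : EuclideanSpace ℝ (Fin m)) (hu : C *ᵥ u = 0) :
    (∀ x ∈ Ω, (∑ i, u i * G x i) = 0) ∧
    (∀ (x : EuclideanSpace ℝ (Fin m)) (t : ℝ),
      (∀ s ∈ Set.uIcc (0 : ℝ) t, x + s • u ∈ Ω) → f (x + t • u) = f x) := by
  set φ : EuclideanSpace ℝ (Fin m) → ℝ := fun x => ∑ i, u i * G x i with hφdef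
  have hLu : ∀ y, (InnerProductSpace.toDual ℝ (EuclideanSpace ℝ (Fin m)) (G y)) u = φ y := by
    intro y
    simp only [InnerProductSpace.toDual_apply_apply, PiLp.inner_apply, RCLike.inner_apply,
      starRingEnd_apply, star_trivial, hφdef]
  have hfd : ∀ y, fderiv ℝ f y =
      (InnerProductSpace.toDual ℝ (EuclideanSpace ℝ (Fin m)) (G y) : _) := fun y =>
    ((hG y).hasFDerivAt).fderiv
  have hφcont : Continuous φ := by
    have h1 : Continuous fun y => (fderiv ℝ f y) u :=
      (ContinuousLinearMap.apply ℝ ℝ u).continuous.comp (hf.continuous_fderiv one_ne_zero)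
    have h2 : (fun y => (fderiv ℝ f y) u) = φ := by
      funext y; rw [hfd y]; exact hLu y
    rwa [h2] at h1
  have hρnn : ∀ x, 0 ≤ ρ x := by
    intro x
    by_cases h : x ∈ Ω
    · exact (hρpos x h).le
    · rw [hρz x h]
  -- the integrand
  have expand : (fun x => φ x ^ 2 * ρ x)
      = fun x => ∑ i, ∑ j, u i * u j * (G x i * G x j * ρ x) := by
    funext x
    show (∑ i, u i * G x i) ^ 2 * ρ x = _
    rw [pow_two, Finset.sum_mul_sum, Finset.sum_mul]
    refine Finset.sum_congr rfl fun i _ => ?_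
    rw [Finset.sum_mul]
    exact Finset.sum_congr rfl fun j _ => by ring
  have hint : Integrable (fun x => φ x ^ 2 * ρ x) := by
    rw [expand]
    exact integrable_finset_sum _ fun i _ =>
      integrable_finset_sum _ fun j _ => (hInt i j).const_mul _
  have hu' : ∀ i, ∑ j, C i j * u j = 0 := by
    intro i
    have := congrFun hu i
    simpa [Matrix.mulVec, dotProduct] using this
  have hzero : ∫ x, φ x ^ 2 * ρ x = 0 := by
    rw [expand, integral_finset_sum _ (fun i _ =>
      integrable_finset_sum _ fun j _ => (hInt i j).const_mul _)]
    have h1 : ∀ i ∈ Finset.univ, (∫ x, ∑ j, u i * u j * (G x i * G x j * ρ x))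
        = ∑ j, u i * u j * C i j := by
      intro i _
      rw [integral_finset_sum _ fun j _ => (hInt i j).const_mul _]
      exact Finset.sum_congr rfl fun j _ => by rw [MeasureTheory.integral_const_mul, hC]
    rw [Finset.sum_congr rfl h1]
    calc ∑ i, ∑ j, u i * u j * C i j = ∑ i, u i * ∑ j, C i j * u j := by
          refine Finset.sum_congr rfl fun i _ => ?_
          rw [Finset.mul_sum]
          exact Finset.sum_congr rfl fun j _ => by ring
      _ = 0 := by simp [hu']
  have hae : (fun x => φ x ^ 2 * ρ x) =ᵐ[volume] 0 :=
    (integral_eq_zero_iff_of_nonneg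
      (fun x => mul_nonneg (sq_nonneg _) (hρnn x)) hint).mp hzero
  have key : ∀ y ∈ Ω, φ y = 0 := by
    intro y hy
    by_contra hne
    have hUo : IsOpen (Ω ∩ φ ⁻¹' {0}ᶜ) :=
      hΩo.inter (isOpen_compl_singleton.preimage hφcont)
    have hsub : (Ω ∩ φ ⁻¹' {0}ᶜ) ⊆ {z | ¬ (φ z ^ 2 * ρ z = (0 : EuclideanSpace ℝ (Fin m) → ℝ) z)} := by
      intro z hz
      simp only [Set.mem_setOf_eq, Pi.zero_apply]
      exact mul_ne_zero (pow_ne_zero 2 hz.2) (hρpos z hz.1).ne'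
    have h0 : volume {z | ¬ (φ z ^ 2 * ρ z = (0 : EuclideanSpace ℝ (Fin m) → ℝ) z)} = 0 :=
      ae_iff.mp hae
    have hU0 : volume (Ω ∩ φ ⁻¹' {0}ᶜ) = 0 := measure_mono_null hsub h0
    exact absurd hU0 (hUo.measure_pos volume ⟨y, hy, hne⟩).ne'
  refine ⟨key, ?_⟩
  intro x t hs
  have hderiv0 : ∀ s : ℝ, x + s • u ∈ Ω → HasDerivAt (fun s : ℝ => f (x + s • u)) 0 s := by
    intro s hsΩ
    have hp : HasDerivAt (fun s : ℝ => x + s • u) u s := by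
      have : HasDerivAt (fun s : ℝ => s • u) ((1 : ℝ) • u) s :=
        (hasDerivAt_id s).smul_const u
      simpa using this.const_add x
    have hF := ((hG (x + s • u)).hasFDerivAt).comp_hasDerivAt s hp
    have : (InnerProductSpace.toDual ℝ (EuclideanSpace ℝ (Fin m)) (G (x + s • u))) u = 0 := by
      rw [hLu]; exact key _ hsΩ
    rwa [this] at hF
  have hcont : Continuous (fun s : ℝ => f (x + s • u)) :=
    hf.continuous.comp (continuous_const.add (continuous_id.smul continuous_const))
  rcases le_total (0 : ℝ) t with ht | ht
  · have huIcc : Set.uIcc (0 : ℝ) t = Set.Icc 0 t := Set.uIcc_of_le ht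
    have := constant_of_has_deriv_right_zero (f := fun s : ℝ => f (x + s • u))
      (hcont.continuousOn)
      (fun s hsI => (hderiv0 s (hs s (by rw [huIcc]; exact Set.Ico_subset_Icc_self hsI))).hasDerivWithinAt)
      t (by rw [← huIcc]; exact Set.right_mem_uIcc)
    simpa using this
  · have huIcc : Set.uIcc (0 : ℝ) t = Set.Icc t 0 := Set.uIcc_of_ge ht
    have := constant_of_has_deriv_right_zero (f := fun s : ℝ => f (x + s • u))
      (hcont.continuousOn)
      (fun s hsI => (hderiv0 s (hs s (by rw [huIcc]; exact Set.Ico_subset_Icc_self hsI))).hasDerivWithinAt)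
      0 (by rw [← huIcc]; exact Set.left_mem_uIcc)
    simpa using this.symm
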